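/- Let a_k ∈ R² satisfy a_{k+1} = M a_k where M = [[1 - 2s²σ², -sσ], [sσ, 1]] with σ > 0 and sσ < 1/2. Then for all k ≥ 0, ‖a_k‖² ≥ (1/3)(1 - s²σ²)^k ‖a_0‖². -/

import Mathlib

open Matrix

theorem stmt10 (s σ : ℝ) (hs : 0 < s) (hσ : 0 < σ) (hsσ : s * σ < 1/2)
    (a : ℕ → Fin 2 → ℝ)
    (ha : ∀ k, a (k+1) = (!![1 - 2*s^2*σ^2, -(s*σ); s*σ, 1]).mulVec (a k)) :
    ∀ k : ℕ, (1/3) * (1 - s^2*σ^2)^k * (a 0 ⬝ᵥ a 0) ≤ a k ⬝ᵥ a k := by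
  set ε := s * σ with hε
  have hε0 : 0 < ε := mul_pos hs hσ
  set Q : ℕ → ℝ := fun k => a k 0 ^ 2 + a k 1 ^ 2 + 2 * ε * (a k 0) * (a k 1) with hQ
  have hx : ∀ k, a (k+1) 0 = (1 - 2*s^2*σ^2) * a k 0 + (-(s*σ)) * a k 1 := by
    intro k
    rw [ha k]
    simp [Matrix.mulVec, dotProduct, Fin.sum_univ_two]
    exact Or.inl hε
  have hy : ∀ k, a (k+1) 1 = (s*σ) * a k 0 + 1 * a k 1 := by
    intro k
    rw [ha k]
    simp [Matrix.mulVec, dotProduct, Fin.sum_univ_two]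
    exact Or.inl hε
  have hstep : ∀ k, Q (k+1) = (1 - ε^2) * Q k := by
    intro k
    simp only [hQ]
    rw [hx k, hy k, hε]
    ring
  have hQk : ∀ k, Q k = (1 - ε^2)^k * Q 0 := by
    intro k
    induction k with
    | zero => simp
    | succ n ih => rw [hstep n, ih, pow_succ]; ring
  have hdot : ∀ k, a k ⬝ᵥ a k = a k 0 ^ 2 + a k 1 ^ 2 := by
    intro k
    simp [dotProduct, Fin.sum_univ_two, sq]
  intro k
  rw [hdot k, hdot 0]
  have hP : (0:ℝ) ≤ (1 - ε^2)^k := by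
    apply pow_nonneg
    nlinarith
  have hQle : Q k ≤ (1 + ε) * (a k 0 ^ 2 + a k 1 ^ 2) := by
    simp only [hQ]
    nlinarith [sq_nonneg (a k 0 - a k 1), hε0.le]
  have hQ0 : (1 - ε) * (a 0 0 ^ 2 + a 0 1 ^ 2) ≤ Q 0 := by
    simp only [hQ]
    nlinarith [sq_nonneg (a 0 0 + a 0 1), hε0.le]
  have hS : (0:ℝ) ≤ a 0 0 ^ 2 + a 0 1 ^ 2 := by positivity
  have hkey : (1 - ε^2)^k * ((1 - ε) * (a 0 0 ^ 2 + a 0 1 ^ 2)) ≤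
      (1 + ε) * (a k 0 ^ 2 + a k 1 ^ 2) := by
    calc (1 - ε^2)^k * ((1 - ε) * (a 0 0 ^ 2 + a 0 1 ^ 2))
        ≤ (1 - ε^2)^k * Q 0 := by
          apply mul_le_mul_of_nonneg_left hQ0 hP
      _ = Q k := (hQk k).symm
      _ ≤ (1 + ε) * (a k 0 ^ 2 + a k 1 ^ 2) := hQle
  have h12 : ε < 1/2 := hsσ
  have hsq : s^2 * σ^2 = ε^2 := by rw [hε]; ring
  rw [hsq]
  nlinarith [mul_nonneg hP hS, hkey, hε0.le]
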